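/- The function U(z,t) = (t² + (1+|z|²)²)^{−1/2} satisfies ∫_{ℂ×ℝ} |z|² U(z,t)⁴ dz dt = π²/4 (equivalently, writing z = x+iy, ∫ (x²+y²) U⁴ = π²/4), where the integral is with respect to Lebesgue measure on ℂ×ℝ ≅ ℝ³. -/

import Mathlib

open MeasureTheory Real

/-- The Jerison–Lee bubble `U(z,t) = (t² + (1+|z|²)²)^{-1/2}` on `H¹ = ℂ × ℝ`. -/
noncomputable def jerisonLeeBubble (p : ℂ × ℝ) : ℝ :=
  (p.2 ^ 2 + (1 + ‖p.1‖ ^ 2) ^ 2) ^ (-(1 / 2 : ℝ))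

section JLAux
open Set Filter Topology

lemma jlAux_hasDerivAt_F {a : ℝ} (ha : 0 < a) (t : ℝ) :
    HasDerivAt (fun t : ℝ => t / (2*a^2*(t^2+a^2)) + arctan (t/a) / (2*a^3))
      (((t^2+a^2)^2)⁻¹) t := by
  have hden : 2*a^2*(t^2+a^2) ≠ 0 := by positivity
  have hd : HasDerivAt (fun t : ℝ => 2*a^2*(t^2+a^2)) (2*a^2*(2*t^1)) t := by
    have := ((hasDerivAt_pow 2 t).add_const (a^2)).const_mul (2*a^2)
    simpa using this
  have h1 : HasDerivAt (fun t : ℝ => t / (2*a^2*(t^2+a^2)))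
      ((1*(2*a^2*(t^2+a^2)) - t*(2*a^2*(2*t^1)))/(2*a^2*(t^2+a^2))^2) t :=
    (hasDerivAt_id t).div hd hden
  have harc : HasDerivAt (fun t : ℝ => arctan (t/a)) ((1/(1+(t/a)^2)) * (1/a)) t :=
    by have := (Real.hasDerivAt_arctan (t/a)).comp t ((hasDerivAt_id t).div_const a); exact this
  have h2 := harc.div_const (2*a^3)
  have h : HasDerivAt (fun t : ℝ => t / (2*a^2*(t^2+a^2)) + arctan (t/a) / (2*a^3)) _ t :=
    h1.add h2
  convert h using 1
  have h1' : t^2 + a^2 ≠ 0 := by positivity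
  have h2' : 1 + (t/a)^2 ≠ 0 := by positivity
  field_simp
  ring

lemma jlAux_slice_Ioi {a : ℝ} (ha : 0 < a) :
    ∫ t in Ioi (0:ℝ), ((t^2+a^2)^2)⁻¹ = π / (4*a^3) := by
  have hF := fun t => jlAux_hasDerivAt_F ha t
  have hlim1 : Tendsto (fun t : ℝ => t / (2*a^2*(t^2+a^2))) atTop (𝓝 0) := by
    apply squeeze_zero' (by filter_upwards [eventually_gt_atTop (0:ℝ)] with t ht; positivity)
      (g := fun t => (2*a^2*t)⁻¹)
    · filter_upwards [eventually_gt_atTop (0:ℝ)] with t ht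
      rw [inv_eq_one_div, div_le_div_iff₀ (by positivity) (by positivity)]
      nlinarith [sq_nonneg a, sq_nonneg t, pow_pos ha 4]
    · apply tendsto_inv_atTop_zero.comp
      exact (tendsto_id.const_mul_atTop (by positivity : (0:ℝ) < 2*a^2))
  have hlim2 : Tendsto (fun t : ℝ => arctan (t/a) / (2*a^3)) atTop (𝓝 ((π/2)/(2*a^3))) := by
    apply Tendsto.div_const
    exact (tendsto_nhds_of_tendsto_nhdsWithin tendsto_arctan_atTop).comp
      (tendsto_id.atTop_div_const ha)
  have hlim : Tendsto (fun t : ℝ => t / (2*a^2*(t^2+a^2)) + arctan (t/a) / (2*a^3)) atTop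
      (𝓝 (π/(4*a^3))) := by
    have := hlim1.add hlim2
    rwa [show (0:ℝ) + (π/2)/(2*a^3) = π/(4*a^3) by ring] at this
  have := integral_Ioi_of_hasDerivAt_of_nonneg' (a := 0) (fun t _ => hF t)
    (fun t _ => by positivity) hlim
  rw [this]
  norm_num [Real.arctan_zero]

lemma jlAux_slice_integral {a : ℝ} (ha : 0 < a) :
    ∫ t : ℝ, ((t^2+a^2)^2)⁻¹ = π / (2*a^3) := by
  have h2 := integral_comp_abs (f := fun x : ℝ => ((x^2+a^2)^2)⁻¹)
  simp only [sq_abs] at h2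
  rw [h2, jlAux_slice_Ioi ha]
  ring

lemma jlAux_slice_integrable {a : ℝ} (ha : 1 ≤ a) :
    Integrable (fun t : ℝ => ((t^2+a^2)^2)⁻¹) := by
  have ha0 : (0:ℝ) < a := lt_of_lt_of_le one_pos ha
  refine integrable_inv_one_add_sq.mono ?_ ?_
  · exact (((continuous_pow 2).add continuous_const).pow 2 |>.inv₀
      (fun t => by simp only [Pi.add_apply, Pi.pow_apply]; positivity)).aestronglyMeasurable
  · filter_upwards with t
    rw [Real.norm_eq_abs, Real.norm_eq_abs, abs_of_nonneg (by positivity), abs_of_nonneg (by positivity)]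
    rw [inv_le_inv₀ (by positivity) (by positivity)]
    have h1 : (1:ℝ) ≤ a^2 := by nlinarith
    nlinarith [sq_nonneg t, sq_nonneg (t^2), mul_le_mul_of_nonneg_left h1 (sq_nonneg t)]

lemma jlAux_radial : ∫ y in Ioi (0:ℝ), y^3 * ((1+y^2)^3)⁻¹ = 1/4 := by
  have hG : ∀ y : ℝ, HasDerivAt (fun y : ℝ => (4*(1+y^2)^2)⁻¹ - (2*(1+y^2))⁻¹)
      (y^3 * ((1+y^2)^3)⁻¹) y := by
    intro y
    have hq : HasDerivAt (fun y : ℝ => 1 + y^2) (2*y^(2-1)) y := by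
      simpa using (hasDerivAt_pow 2 y).const_add 1
    have h1 := ((hq.pow 2).const_mul 4).inv (by simp only [Pi.pow_apply]; positivity)
    have h2 := (hq.const_mul 2).inv (by positivity)
    have h : HasDerivAt (fun y : ℝ => (4*(1+y^2)^2)⁻¹ - (2*(1+y^2))⁻¹) _ y := h1.sub h2
    convert h using 1
    have h0 : (1:ℝ) + y^2 ≠ 0 := by positivity
    simp only [Pi.pow_apply]
    field_simp
    ring
  have h0 : Tendsto (fun y:ℝ => 1+y^2) atTop atTop :=
    tendsto_atTop_add_const_left _ 1 (tendsto_pow_atTop two_ne_zero)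
  have t1 : Tendsto (fun y:ℝ => (4*(1+y^2)^2)⁻¹) atTop (𝓝 0) :=
    tendsto_inv_atTop_zero.comp (((tendsto_pow_atTop two_ne_zero).comp h0).const_mul_atTop
      (by norm_num))
  have t2 : Tendsto (fun y:ℝ => (2*(1+y^2))⁻¹) atTop (𝓝 0) :=
    tendsto_inv_atTop_zero.comp (h0.const_mul_atTop (by norm_num))
  have hlim : Tendsto (fun y : ℝ => (4*(1+y^2)^2)⁻¹ - (2*(1+y^2))⁻¹) atTop (𝓝 0) := by
    simpa using t1.sub t2
  have := integral_Ioi_of_hasDerivAt_of_nonneg' (a := 0) (fun y _ => hG y)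
    (fun y hy => by have hy' : (0:ℝ) < y := hy; positivity) hlim
  rw [this]; norm_num

lemma jlAux_planar_integrable :
    Integrable (fun z : ℂ => ‖z‖^2 * (π / (2*(1+‖z‖^2)^3))) := by
  have hb : Integrable (fun z : ℂ => 2*π * ((1:ℝ)+‖z‖)^(-(4:ℝ))) :=
    (integrable_one_add_norm (by norm_num [Complex.finrank_real_complex] :
      ((Module.finrank ℝ ℂ : ℝ) < 4))).const_mul _
  refine hb.mono' ?_ ?_
  · exact ((continuous_norm.pow 2).mul (continuous_const.div
      ((continuous_const.mul ((continuous_const.add (continuous_norm.pow 2)).pow 3)))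
      (fun z => by simp only [Pi.add_apply, Pi.pow_apply, Pi.mul_apply]; positivity))).aestronglyMeasurable
  · filter_upwards with z
    have hs0 : (0:ℝ) ≤ ‖z‖ := norm_nonneg z
    set s := ‖z‖ with hs
    have hr : ((1:ℝ)+s)^(-(4:ℝ)) = (((1:ℝ)+s)^4)⁻¹ := by
      rw [show (-(4:ℝ)) = -((4:ℕ):ℝ) by norm_num, Real.rpow_neg (by positivity),
        Real.rpow_natCast]
    rw [Real.norm_eq_abs, abs_of_nonneg (by positivity), hr]
    have key : s^2*(1+s)^4 ≤ 4*(1+s^2)^3 := by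
      nlinarith [sq_nonneg (s*(1-s)), sq_nonneg (s^2*(1-s)), sq_nonneg s, sq_nonneg (s^2),
        sq_nonneg (s^3)]
    have e1 : s^2 * (π/(2*(1+s^2)^3)) = (s^2*π)/(2*(1+s^2)^3) := by ring
    have e2 : 2*π*(((1:ℝ)+s)^4)⁻¹ = (2*π)/((1+s)^4) := by ring
    rw [e1, e2, div_le_div_iff₀ (by positivity) (by positivity)]
    nlinarith [mul_le_mul_of_nonneg_left key pi_pos.le]

lemma jlAux_planar : ∫ z : ℂ, ‖z‖^2 * (π / (2*(1+‖z‖^2)^3)) = π^2/4 := by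
  have h := integral_fun_norm_addHaar (volume : Measure ℂ)
    (fun y : ℝ => y^2 * (π / (2*(1+y^2)^3)))
  simp only [Complex.finrank_real_complex] at h
  rw [h]
  have hvol : volume.real (Metric.ball (0:ℂ) 1) = π := by
    simp [Measure.real, Complex.volume_ball]
  rw [hvol]
  have hcong : ∀ y : ℝ, y^(2-1) • (y^2 * (π / (2*(1+y^2)^3)))
      = (π/2) * (y^3 * ((1+y^2)^3)⁻¹) := by
    intro y
    rw [smul_eq_mul, div_eq_mul_inv, mul_inv]
    ring
  simp_rw [hcong]
  rw [integral_const_mul, jlAux_radial]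
  simp [smul_eq_mul]
  ring


end JLAux

open Set Filter Topology in
set_option maxHeartbeats 1000000 in
/-- `∫_{ℂ×ℝ} |z|² U(z,t)⁴ dz dt = π²/4`, with respect to Lebesgue
measure on `ℂ × ℝ` (here `|z|² = x² + y²` for `z = x + iy`). -/
theorem integral_normSq_mul_jerisonLeeBubble_fourth :
    ∫ p : ℂ × ℝ, ‖p.1‖ ^ 2 * (jerisonLeeBubble p) ^ 4 = π ^ 2 / 4 := by
  have hrw : ∀ p : ℂ × ℝ, ‖p.1‖ ^ 2 * (jerisonLeeBubble p) ^ 4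
      = ‖p.1‖^2 * ((p.2^2 + (1+‖p.1‖^2)^2)^2)⁻¹ := by
    intro p
    unfold jerisonLeeBubble
    congr 1
    have hx : (0:ℝ) < p.2^2 + (1+‖p.1‖^2)^2 := by positivity
    rw [← Real.rpow_natCast (_ ^ (-(1/2:ℝ))) 4, ← Real.rpow_mul hx.le,
      show (-(1/2:ℝ))*((4:ℕ):ℝ) = -((2:ℕ):ℝ) by norm_num, Real.rpow_neg hx.le,
      Real.rpow_natCast]
  simp only [hrw]
  have hden : Continuous (fun p : ℂ × ℝ => (p.2^2 + (1+‖p.1‖^2)^2)^2) :=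
    ((continuous_snd.pow 2).add ((continuous_const.add (continuous_fst.norm.pow 2)).pow 2)).pow 2
  have hcont : Continuous (fun p : ℂ × ℝ => ‖p.1‖^2 * ((p.2^2 + (1+‖p.1‖^2)^2)^2)⁻¹) :=
    (continuous_fst.norm.pow 2).mul (hden.inv₀ (fun p => by positivity))
  have hint : Integrable (fun p : ℂ × ℝ => ‖p.1‖^2 * ((p.2^2 + (1+‖p.1‖^2)^2)^2)⁻¹)
      ((volume : Measure ℂ).prod (volume : Measure ℝ)) := by
    rw [integrable_prod_iff (by exact hcont.aestronglyMeasurable)]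
    constructor
    · refine ae_of_all _ fun z => ?_
      have h1 : (1:ℝ) ≤ 1 + ‖z‖^2 := le_add_of_nonneg_right (sq_nonneg _)
      have := (jlAux_slice_integrable h1).const_mul (‖z‖^2)
      simpa using this
    · refine jlAux_planar_integrable.congr (ae_of_all _ fun z => ?_)
      simp only [Real.norm_eq_abs]
      have habs : ∀ t : ℝ, |‖z‖^2 * ((t^2 + (1+‖z‖^2)^2)^2)⁻¹|
          = ‖z‖^2 * ((t^2 + (1+‖z‖^2)^2)^2)⁻¹ := fun t => abs_of_nonneg (by positivity)
      simp_rw [habs, integral_const_mul, jlAux_slice_integral (by positivity : (0:ℝ) < 1+‖z‖^2)]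
  rw [Measure.volume_eq_prod, integral_prod _ hint]
  have hin : ∀ z : ℂ, (∫ t:ℝ, ‖z‖^2 * ((t^2 + (1+‖z‖^2)^2)^2)⁻¹)
      = ‖z‖^2 * (π / (2*(1+‖z‖^2)^3)) := fun z => by
    rw [integral_const_mul, jlAux_slice_integral (by positivity : (0:ℝ) < 1+‖z‖^2)]
  simp_rw [hin]
  exact jlAux_planar
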